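/- A solution u of the first-order equation (u')² = ((n-2)/2)²·(u² - u^{2n/(n-2)}) + c̄ with u : ℝ → (0,∞) bounded away from 0 and ∞, non-constant, and periodic can exist only if the energy constant c̄ satisfies -(2/n)·((n-2)/2)²·((n-2)/n)^{(n-2)/2} < c̄ < 0. -/

import Mathlib

open Real Set

/-- Abstract key inequality: if `P = θ^q`, `q*(r-1) = 1`, `r*θ = 1`, `r > 1`, then for
`y > 0`, `y ≠ P`, we have `y - y^r < (1-θ)*P`. -/
lemma energy_key_abstract (θ q r P y : ℝ) (hθ : 0 < θ) (hr : 1 < r)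
    (hP : P = θ ^ q) (hq1 : q * (r - 1) = 1) (hrθ : r * θ = 1)
    (hy : 0 < y) (hne : y ≠ P) :
    y - y ^ r < (1 - θ) * P := by
  have hP0 : 0 < P := hP ▸ Real.rpow_pos_of_pos hθ q
  have hPne : P ≠ 0 := hP0.ne'
  have hPr1 : P ^ (r - 1) = θ := by
    rw [hP, ← Real.rpow_mul hθ.le, hq1, Real.rpow_one]
  have hPr : P ^ r = θ * P := by
    have h : r = (r - 1) + 1 := by ring
    rw [h, Real.rpow_add hP0, Real.rpow_one, hPr1]
  have hs : (-1 : ℝ) ≤ y / P - 1 := by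
    have := div_pos hy hP0; linarith
  have hs' : y / P - 1 ≠ 0 := by
    intro h
    exact hne ((div_eq_one_iff_eq hPne).1 (sub_eq_zero.1 h))
  have hB := one_add_mul_self_lt_rpow_one_add hs hs' hr
  have h1s : (1 : ℝ) + (y / P - 1) = y / P := by ring
  rw [h1s, Real.div_rpow hy.le hP0.le] at hB
  have hPr0 : 0 < P ^ r := Real.rpow_pos_of_pos hP0 r
  have hmul : (1 + r * (y / P - 1)) * P ^ r < y ^ r := by
    calc (1 + r * (y / P - 1)) * P ^ r < y ^ r / P ^ r * P ^ r :=
          mul_lt_mul_of_pos_right hB hPr0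
      _ = y ^ r := div_mul_cancel₀ _ hPr0.ne'
  have hexp : (1 + r * (y / P - 1)) * P ^ r = θ * P + y - P := by
    calc (1 + r * (y / P - 1)) * P ^ r
        = θ * P + (r * θ) * (y / P * P) - (r * θ) * P := by rw [hPr]; ring
      _ = θ * P + y - P := by rw [hrθ, div_mul_cancel₀ y hPne]; ring
  rw [hexp] at hmul
  nlinarith

/-- Key strict inequality: for `y > 0`, `y ≠ θ^q`, we have `y - y^r < (2/N) θ^q`,
where `θ = (N-2)/N`, `q = (N-2)/2`, `r = N/(N-2)`. -/
lemma energy_key_lt (N : ℝ) (hN : 3 ≤ N) {y : ℝ} (hy : 0 < y)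
    (hne : y ≠ ((N - 2) / N) ^ ((N - 2) / 2)) :
    y - y ^ (N / (N - 2)) < 2 / N * ((N - 2) / N) ^ ((N - 2) / 2) := by
  have hN2 : (0:ℝ) < N - 2 := by linarith
  have hNpos : (0:ℝ) < N := by linarith
  have hθ : 0 < (N - 2) / N := div_pos hN2 hNpos
  have hr : 1 < N / (N - 2) := by rw [lt_div_iff₀ hN2]; linarith
  have hq1 : (N - 2) / 2 * (N / (N - 2) - 1) = 1 := by field_simp; ring
  have hrθ : N / (N - 2) * ((N - 2) / N) = 1 := by field_simp
  have h := energy_key_abstract ((N - 2) / N) ((N - 2) / 2) (N / (N - 2))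
    (((N - 2) / N) ^ ((N - 2) / 2)) y hθ hr rfl hq1 hrθ hy hne
  have heq : (1 - (N - 2) / N) = 2 / N := by field_simp; ring
  rw [heq] at h
  exact h

/-- On `[1, ∞)`, `y ↦ y - y^r` is strictly decreasing for `r = N/(N-2) > 1`. -/
lemma energy_g_strict_anti (N : ℝ) (hN : 3 ≤ N) {a b : ℝ} (ha : 1 ≤ a) (hab : a < b) :
    b - b ^ (N / (N - 2)) < a - a ^ (N / (N - 2)) := by
  have hN2 : (0:ℝ) < N - 2 := by linarith
  have hr : 1 < N / (N - 2) := by rw [lt_div_iff₀ hN2]; linarith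
  have ha0 : 0 < a := lt_of_lt_of_le one_pos ha
  have hb0 : 0 < b := ha0.trans hab
  have hspos : 0 < b / a - 1 := by
    have : 1 < b / a := (one_lt_div ha0).2 hab
    linarith
  have hB := one_add_mul_self_lt_rpow_one_add (by linarith : (-1:ℝ) ≤ b / a - 1) hspos.ne' hr
  have h1s : (1:ℝ) + (b / a - 1) = b / a := by ring
  rw [h1s, Real.div_rpow hb0.le ha0.le] at hB
  have har : 0 < a ^ (N / (N - 2)) := Real.rpow_pos_of_pos ha0 _
  have hmul : (1 + N / (N - 2) * (b / a - 1)) * a ^ (N / (N - 2)) < b ^ (N / (N - 2)) := by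
    calc (1 + N / (N - 2) * (b / a - 1)) * a ^ (N / (N - 2))
        < b ^ (N / (N - 2)) / a ^ (N / (N - 2)) * a ^ (N / (N - 2)) :=
          mul_lt_mul_of_pos_right hB har
      _ = b ^ (N / (N - 2)) := div_mul_cancel₀ _ har.ne'
  have har_ge : a ≤ a ^ (N / (N - 2)) := by
    calc a = a ^ (1:ℝ) := (Real.rpow_one a).symm
      _ ≤ a ^ (N / (N - 2)) := Real.rpow_le_rpow_of_exponent_le ha hr.le
  have hkey : a ^ (N / (N - 2)) + (b - a) ≤ (1 + N / (N - 2) * (b / a - 1)) * a ^ (N / (N - 2)) := by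
    have h1 : 1 * (b / a - 1) * a ≤ N / (N - 2) * (b / a - 1) * a ^ (N / (N - 2)) := by
      apply mul_le_mul
      · nlinarith
      · exact har_ge
      · exact ha0.le
      · positivity
    have h2 : 1 * (b / a - 1) * a = b - a := by field_simp
    nlinarith
  linarith

theorem energy_range_for_periodic_orbits
    (n : ℕ) (hn : 3 ≤ n) (cbar : ℝ)
    (u : ℝ → ℝ) (hcont : Continuous u)
    (hfirst : ∀ t, (deriv u t) ^ 2
        = (((n : ℝ) - 2) / 2) ^ 2 * ((u t) ^ 2 - (u t) ^ (2 * (n : ℝ) / ((n : ℝ) - 2))) + cbar)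
    (hbdd : ∃ m M : ℝ, 0 < m ∧ ∀ t, m ≤ u t ∧ u t ≤ M)
    (hnonconst : ∃ t₁ t₂, u t₁ ≠ u t₂)
    (hper : ∃ T > 0, Function.Periodic u T) :
    -(2 / (n : ℝ)) * (((n : ℝ) - 2) / 2) ^ 2 * (((n : ℝ) - 2) / n) ^ (((n : ℝ) - 2) / 2) < cbar
      ∧ cbar < 0 := by
  obtain ⟨m, M, hm, hbd⟩ := hbdd
  obtain ⟨T, hT, hperiod⟩ := hper
  have hN : (3:ℝ) ≤ (n:ℝ) := by exact_mod_cast hn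
  have hN2 : (0:ℝ) < (n:ℝ) - 2 := by linarith
  have hNpos : (0:ℝ) < (n:ℝ) := by linarith
  have hc : (0:ℝ) < (((n:ℝ) - 2) / 2) ^ 2 := by positivity
  -- extrema on a period
  obtain ⟨tM, _, htM⟩ := isCompact_Icc.exists_isMaxOn (Set.nonempty_Icc.2 hT.le)
    (hcont.continuousOn (s := Set.Icc 0 T))
  obtain ⟨tm, _, htm⟩ := isCompact_Icc.exists_isMinOn (Set.nonempty_Icc.2 hT.le)
    (hcont.continuousOn (s := Set.Icc 0 T))
  have hMax : ∀ t, u t ≤ u tM := by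
    intro t
    obtain ⟨y, hy, hy'⟩ := hperiod.exists_mem_Ico hT t 0
    rw [hy']
    exact htM ⟨hy.1, by linarith [hy.2]⟩
  have hMin : ∀ t, u tm ≤ u t := by
    intro t
    obtain ⟨y, hy, hy'⟩ := hperiod.exists_mem_Ico hT t 0
    rw [hy']
    exact htm ⟨hy.1, by linarith [hy.2]⟩
  have hdM : deriv u tM = 0 :=
    IsLocalMax.deriv_eq_zero (Filter.Eventually.of_forall hMax)
  have hdm : deriv u tm = 0 :=
    IsLocalMin.deriv_eq_zero (Filter.Eventually.of_forall hMin)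
  have ha0 : 0 < u tm := lt_of_lt_of_le hm (hbd tm).1
  have hb0 : 0 < u tM := lt_of_lt_of_le hm (hbd tM).1
  have hab : u tm < u tM := by
    rcases lt_or_eq_of_le (hMin tM) with h | h
    · exact h
    · exfalso
      obtain ⟨t₁, t₂, hne⟩ := hnonconst
      exact hne (le_antisymm (h ▸ hMax t₁) (hMin t₁) ▸
        (le_antisymm (h ▸ hMax t₂) (hMin t₂)).symm ▸ rfl)
  -- rewrite the rpow exponent: x ^ (2N/(N-2)) = (x^2) ^ (N/(N-2)) for x > 0
  have hpow : ∀ x : ℝ, 0 < x →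
      x ^ (2 * (n:ℝ) / ((n:ℝ) - 2)) = (x ^ 2) ^ ((n:ℝ) / ((n:ℝ) - 2)) := by
    intro x hx
    rw [show 2 * (n:ℝ) / ((n:ℝ) - 2) = ((2:ℕ) : ℝ) * ((n:ℝ) / ((n:ℝ) - 2)) by push_cast; ring]
    exact Real.rpow_natCast_mul hx.le 2 _
  have hfM := hfirst tM
  have hfm := hfirst tm
  rw [hdM, hpow _ hb0] at hfM
  rw [hdm, hpow _ ha0] at hfm
  have hya0 : 0 < (u tm) ^ 2 := by positivity
  have hyab : (u tm) ^ 2 < (u tM) ^ 2 := by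
    exact pow_lt_pow_left₀ hab ha0.le two_ne_zero
  have hEa : (((n:ℝ) - 2) / 2) ^ 2 * ((u tm) ^ 2 - ((u tm) ^ 2) ^ ((n:ℝ) / ((n:ℝ) - 2)))
      + cbar = 0 := by
    rw [← hfm]; ring
  have hEb : (((n:ℝ) - 2) / 2) ^ 2 * ((u tM) ^ 2 - ((u tM) ^ 2) ^ ((n:ℝ) / ((n:ℝ) - 2)))
      + cbar = 0 := by
    rw [← hfM]; ring
  have hEq : (u tm) ^ 2 - ((u tm) ^ 2) ^ ((n:ℝ) / ((n:ℝ) - 2))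
      = (u tM) ^ 2 - ((u tM) ^ 2) ^ ((n:ℝ) / ((n:ℝ) - 2)) := by
    have h1 : (((n:ℝ) - 2) / 2) ^ 2 * ((u tm) ^ 2 - ((u tm) ^ 2) ^ ((n:ℝ) / ((n:ℝ) - 2)))
        = (((n:ℝ) - 2) / 2) ^ 2 * ((u tM) ^ 2 - ((u tM) ^ 2) ^ ((n:ℝ) / ((n:ℝ) - 2))) := by
      linarith
    exact mul_left_cancel₀ hc.ne' h1
  constructor
  · -- lower bound
    have hlt : (u tm) ^ 2 - ((u tm) ^ 2) ^ ((n:ℝ) / ((n:ℝ) - 2))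
        < 2 / (n:ℝ) * (((n:ℝ) - 2) / (n:ℝ)) ^ (((n:ℝ) - 2) / 2) := by
      by_cases hcase : (u tm) ^ 2 = (((n:ℝ) - 2) / (n:ℝ)) ^ (((n:ℝ) - 2) / 2)
      · rw [hEq]
        exact energy_key_lt _ hN (hya0.trans hyab)
          (by rw [← hcase]; exact (ne_of_gt hyab))
      · exact energy_key_lt _ hN hya0 hcase
    have h2 : (((n:ℝ) - 2) / 2) ^ 2 * ((u tm) ^ 2 - ((u tm) ^ 2) ^ ((n:ℝ) / ((n:ℝ) - 2)))
        < (((n:ℝ) - 2) / 2) ^ 2 * (2 / (n:ℝ) * (((n:ℝ) - 2) / (n:ℝ)) ^ (((n:ℝ) - 2) / 2)) :=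
      mul_lt_mul_of_pos_left hlt hc
    nlinarith [h2, hEa]
  · -- upper bound
    by_contra hge
    push_neg at hge
    have hga : (u tm) ^ 2 - ((u tm) ^ 2) ^ ((n:ℝ) / ((n:ℝ) - 2)) ≤ 0 := by
      by_contra hgt
      push_neg at hgt
      have := mul_pos hc hgt
      linarith
    have hya1 : 1 ≤ (u tm) ^ 2 := by
      by_contra hlt1
      push_neg at hlt1
      have hr1 : 1 < (n:ℝ) / ((n:ℝ) - 2) := by rw [lt_div_iff₀ hN2]; linarith
      have h3 : ((u tm) ^ 2) ^ ((n:ℝ) / ((n:ℝ) - 2)) < ((u tm) ^ 2) ^ (1:ℝ) :=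
        Real.rpow_lt_rpow_of_exponent_gt hya0 hlt1 hr1
      rw [Real.rpow_one] at h3
      linarith
    have h4 := energy_g_strict_anti _ hN hya1 hyab
    linarith [hEq, h4]
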